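/- Let ι = ι_{134567} be the automorphism of the lattice L sending C ↦ C + 3F - E_1 - E_3 - E_4 - E_5 - E_6 - E_7, F ↦ F, E_i ↦ F - E_i for i ∈ {1,3,4,5,6,7}, and E_2 ↦ E_2. Then for every class D = C + aF - Σ b_n E_n with a ≥ 0, b_n ∈ {0,1} and Σ b_n = 2a + 1, one has ι(D) ≠ D, and D + ι(D) ∈ {-K + E_2, -K + (F - E_2)} where K = -2C - 2F + Σ E_n. -/

import Mathlib

set_option maxHeartbeats 2000000

/-- The geometric Picard lattice of a standard rational conic bundle of degree 1:
the free abelian group with basis `C, F, E₁, …, E₇`, realized as `Fin 9 → ℤ`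
(coordinate 0 for `C`, coordinate 1 for `F`, coordinates 2–8 for `E₁,…,E₇`). -/
abbrev Pic1 := Fin 9 → ℤ

/-- The index in `Fin 9` of the basis vector `E_n`. -/
def eIdx (n : Fin 7) : Fin 9 := ⟨n.1 + 2, by have := n.isLt; omega⟩

/-- The basis class `C`. -/
def Cv : Pic1 := fun i => if i = 0 then 1 else 0

/-- The basis class `F` (the class of a fiber). -/
def Fv : Pic1 := fun i => if i = 1 then 1 else 0

/-- The basis class `E_n`. -/
def Ev (n : Fin 7) : Pic1 := fun i => if i = eIdx n then 1 else 0

/-- The intersection pairing: `C·C = F·F = 0`, `C·F = 1`, `E_i·E_i = -1`, and all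
other products among basis vectors vanish. -/
def B (v w : Pic1) : ℤ :=
  v 0 * w 1 + v 1 * w 0 - ∑ n : Fin 7, v (eIdx n) * w (eIdx n)

/-- The canonical class `K = -2C - 2F + E₁ + ⋯ + E₇`. -/
def Kv : Pic1 := fun i => -2 * Cv i - 2 * Fv i + ∑ n : Fin 7, Ev n i

/-- The linear map `ι_S` determined on the basis by
`C ↦ C + (|S|/2)F - Σ_{n ∈ S} Eₙ`, `F ↦ F`, `Eₙ ↦ F - Eₙ` for `n ∈ S` and
`Eₙ ↦ Eₙ` otherwise, written out in coordinates. -/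
def iotaS (S : Finset (Fin 7)) (v : Pic1) : Pic1 := fun i =>
  if i.1 = 0 then v 0
  else if i.1 = 1 then ((S.card : ℤ) / 2) * v 0 + v 1 + ∑ n ∈ S, v (eIdx n)
  else if (⟨i.1 - 2, by have := i.isLt; omega⟩ : Fin 7) ∈ S then -(v 0) - v i
  else v i

/-- The automorphism `ι_{134567}`, sending `C ↦ C + 3F - E₁ - E₃ - E₄ - E₅ - E₆ - E₇`,
`F ↦ F`, `Eᵢ ↦ F - Eᵢ` for `i ∈ {1,3,4,5,6,7}` and `E₂ ↦ E₂`. -/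
def iota134567 : Pic1 → Pic1 := iotaS ({0, 2, 3, 4, 5, 6} : Finset (Fin 7))


lemma sumS_eval (v : Pic1) :
    ∑ n ∈ ({0, 2, 3, 4, 5, 6} : Finset (Fin 7)), v (eIdx n) =
      v 2 + v 4 + v 5 + v 6 + v 7 + v 8 := by
  rw [show ({0, 2, 3, 4, 5, 6} : Finset (Fin 7)) =
      insert 0 (insert 2 (insert 3 (insert 4 (insert 5 ({6} : Finset (Fin 7)))))) from rfl]
  rw [Finset.sum_insert (by decide), Finset.sum_insert (by decide),
    Finset.sum_insert (by decide), Finset.sum_insert (by decide),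
    Finset.sum_insert (by decide), Finset.sum_singleton]
  have h0 : eIdx 0 = 2 := rfl
  have h2 : eIdx 2 = 4 := rfl
  have h3 : eIdx 3 = 5 := rfl
  have h4 : eIdx 4 = 6 := rfl
  have h5 : eIdx 5 = 7 := rfl
  have h6 : eIdx 6 = 8 := rfl
  rw [h0, h2, h3, h4, h5, h6]
  ring

lemma cardS : (({0, 2, 3, 4, 5, 6} : Finset (Fin 7)).card : ℤ) = 6 := by decide

lemma sum_bEv (b : Fin 7 → ℤ) (i : Fin 9) :
    ∑ n : Fin 7, b n * Ev n i =
      if h : 2 ≤ i.1 then b ⟨i.1 - 2, by have := i.isLt; omega⟩ else 0 := by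
  fin_cases i <;>
    simp (config := { decide := true }) [Ev, eIdx, Fin.sum_univ_seven, Fin.ext_iff, Fin.isValue, -Fin.val_eq_zero_iff]

lemma sum_Ev (i : Fin 9) :
    ∑ n : Fin 7, Ev n i = if 2 ≤ i.1 then 1 else 0 := by
  fin_cases i <;>
    simp (config := { decide := true }) [Ev, eIdx, Fin.sum_univ_seven, Fin.ext_iff, Fin.isValue, -Fin.val_eq_zero_iff]

/-- For every `(-1)`-section class `D = C + aF - Σ bₙEₙ` (with `a ≥ 0`, `bₙ ∈ {0,1}`,
`Σ bₙ = 2a + 1`), one has `ι_{134567}(D) ≠ D` and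
`D + ι_{134567}(D) ∈ {-K + E₂, -K + (F - E₂)}`. -/
theorem iota134567_moves_neg_one_sections (a : ℤ) (b : Fin 7 → ℤ)
    (ha : 0 ≤ a) (hb : ∀ n, b n = 0 ∨ b n = 1)
    (hsum : ∑ n : Fin 7, b n = 2 * a + 1) :
    iota134567 (fun i => Cv i + a * Fv i - ∑ n : Fin 7, b n * Ev n i) ≠
        (fun i => Cv i + a * Fv i - ∑ n : Fin 7, b n * Ev n i) ∧
    ((fun i => Cv i + a * Fv i - ∑ n : Fin 7, b n * Ev n i) +
        iota134567 (fun i => Cv i + a * Fv i - ∑ n : Fin 7, b n * Ev n i) =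
          -Kv + Ev 1 ∨
     (fun i => Cv i + a * Fv i - ∑ n : Fin 7, b n * Ev n i) +
        iota134567 (fun i => Cv i + a * Fv i - ∑ n : Fin 7, b n * Ev n i) =
          -Kv + (Fv - Ev 1)) := by
  have hb0 := hb 0; have hb1 := hb 1; have hb2 := hb 2; have hb3 := hb 3
  have hb4 := hb 4; have hb5 := hb 5; have hb6 := hb 6
  rw [Fin.sum_univ_seven] at hsum
  constructor
  · intro h
    have h2 := congrFun h ⟨2, by omega⟩
    simp [iota134567, iotaS, Cv, Fv, Ev, eIdx, Fin.sum_univ_seven, Fin.ext_iff, -Fin.val_eq_zero_iff] at h2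
    omega
  · rcases hb1 with h1 | h1
    · left
      funext i
      fin_cases i <;>
        simp (config := { decide := true }) [iota134567, iotaS, sumS_eval, cardS,
          sum_bEv, sum_Ev, Cv, Fv, Ev, Kv, eIdx, Fin.ext_iff, Fin.isValue, Fin.sum_univ_seven, -Fin.val_eq_zero_iff] <;>
        first
          | omega
          | (rw [show (Finset.filter (fun x : Fin 7 => x.val = 1)
               Finset.univ).card = 1 from by decide]
             omega)
    · right
      funext i
      fin_cases i <;>
        simp (config := { decide := true }) [iota134567, iotaS, sumS_eval, cardS,
          sum_bEv, sum_Ev, Cv, Fv, Ev, Kv, eIdx, Fin.ext_iff, Fin.isValue, Fin.sum_univ_seven, -Fin.val_eq_zero_iff] <;>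
        first
          | omega
          | (rw [show (Finset.filter (fun x : Fin 7 => x.val = 1)
               Finset.univ).card = 1 from by decide]
             omega)
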